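/- arXiv:2006.15215 — 2 statements merged into one kernel-verified Lean document; each statement's English description precedes it below -/
import Mathlib

section
/- Let G be a weighted graph on vertex set {1,…,n} and let x_1,…,x_n be complex numbers. If Im(x_i) > 0 for every vertex i, or if |x_i| > 2·√(B_G) for every vertex i, then the multivariate matching polynomial satisfies μ(G)(x_1,…,x_n) ≠ 0. -/
open Polynomial
open scoped Classical

/-- A matching of the weighted graph with edge weights `lam`, inside the vertex set `A`:
a set of pairs `(j,k)` with `j < k`, `lam j k ≠ 0`, endpoints in `A`,
no two pairs sharing a vertex. -/
def IsMatching {n : ℕ} (lam : Fin n → Fin n → ℝ) (A : Finset (Fin n))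
    (M : Finset (Fin n × Fin n)) : Prop :=
  (∀ e ∈ M, e.1 < e.2 ∧ lam e.1 e.2 ≠ 0 ∧ e.1 ∈ A ∧ e.2 ∈ A) ∧
  ∀ e ∈ M, ∀ f ∈ M, e ≠ f → e.1 ≠ f.1 ∧ e.1 ≠ f.2 ∧ e.2 ≠ f.1 ∧ e.2 ≠ f.2

/-- The vertices covered by a matching. -/
def mVerts {n : ℕ} (M : Finset (Fin n × Fin n)) : Finset (Fin n) :=
  M.image Prod.fst ∪ M.image Prod.snd

/-- The finite set of matchings inside the vertex set `A`. -/
noncomputable def matchings {n : ℕ} (lam : Fin n → Fin n → ℝ) (A : Finset (Fin n)) :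
    Finset (Finset (Fin n × Fin n)) :=
  Finset.univ.filter fun M => IsMatching lam A M

/-- The weighted matching polynomial of the induced weighted subgraph on the vertex set `A`
(the matching polynomial of the empty graph is `1`). -/
noncomputable def mu {n : ℕ} (r : Fin n → ℝ) (lam : Fin n → Fin n → ℝ)
    (A : Finset (Fin n)) : Polynomial ℝ :=
  ∑ M ∈ matchings lam A,
    (∏ i ∈ A \ mVerts M, (X - C (r i))) * C (∏ e ∈ M, lam e.1 e.2)

/-- The multivariate matching polynomial evaluated at the complex numbers `x 1, …, x n`. -/
noncomputable def muC {n : ℕ} (lam : Fin n → Fin n → ℝ) (x : Fin n → ℂ) : ℂ :=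
  ∑ M ∈ matchings lam (Finset.univ : Finset (Fin n)),
    (∏ i ∈ Finset.univ \ mVerts M, x i) * ∏ e ∈ M, (lam e.1 e.2 : ℂ)

/-- The constant `B_G`: for `n ≥ 3` the maximum over vertices `j` and sets
`A ⊆ [n] ∖ {j}` with `|A| = n - 2` of `∑_{k ∈ A} (-λ_{jk})`; `-λ_{12}/4` for `n = 2`;
`0` for `n = 1`. -/
noncomputable def BG (n : ℕ) (lam : Fin n → Fin n → ℝ) : ℝ :=
  if 3 ≤ n then
    sSup {S : ℝ | ∃ j : Fin n, ∃ A : Finset (Fin n),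
      j ∉ A ∧ A.card = n - 2 ∧ S = ∑ k ∈ A, -lam j k}
  else if h : n = 2 then -lam ⟨0, by omega⟩ ⟨1, by omega⟩ / 4
  else 0

/-- `l` is a path from `i` to `j` inside the vertex set `A`: a nonempty list of distinct
vertices of `A`, starting at `i`, ending at `j`, with consecutive vertices joined by
edges of nonzero weight. -/
def IsPathIn {n : ℕ} (lam : Fin n → Fin n → ℝ) (A : Finset (Fin n)) (i j : Fin n)
    (l : List (Fin n)) : Prop :=
  l ≠ [] ∧ l.Nodup ∧ (∀ v ∈ l, v ∈ A) ∧ l.head? = some i ∧ l.getLast? = some j ∧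
    l.Chain' fun u v => lam u v ≠ 0

/-- `λ_c`: the product of `-λ_e` over the edges `e` of the path `c` (equal to `1` for a
trivial path). -/
def pathWeight {n : ℕ} (lam : Fin n → Fin n → ℝ) (l : List (Fin n)) : ℝ :=
  ((l.zip l.tail).map fun p => -lam p.1 p.2).prod

/-- A real polynomial viewed as a rational function. -/
noncomputable def toRF (p : Polynomial ℝ) : RatFunc ℝ :=
  algebraMap (Polynomial ℝ) (RatFunc ℝ) p

/-- The graph continued fraction `α_v = μ(A)/μ(A ∖ v)` as a rational function. -/
noncomputable def alpha {n : ℕ} (r : Fin n → ℝ) (lam : Fin n → Fin n → ℝ) (v : Fin n)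
    (A : Finset (Fin n)) : RatFunc ℝ :=
  toRF (mu r lam A) / toRF (mu r lam (A.erase v))

/-- `λ_{i∼j} = -(∑_{c ∈ [i→j]} λ_c · μ(A∖c)²) / μ(A∖{i,j})²` as a rational function. -/
noncomputable def lamSim {n : ℕ} (r : Fin n → ℝ) (lam : Fin n → Fin n → ℝ) (i j : Fin n)
    (A : Finset (Fin n)) : RatFunc ℝ :=
  -(∑ᶠ l ∈ {l : List (Fin n) | IsPathIn lam A i j l},
      toRF (C (pathWeight lam l) * mu r lam (A \ l.toFinset) ^ 2)) /
    toRF (mu r lam ((A.erase i).erase j)) ^ 2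

/-- The value of a rational function at `θ`, taken after cancelling common factors;
`none` encodes the value `∞` (a pole). -/
noncomputable def valAt (f : RatFunc ℝ) (θ : ℝ) : Option ℝ :=
  if f.denom.eval θ = 0 then none else some (f.num.eval θ / f.denom.eval θ)

/-- The set `0_{θ,A}` of θ-essential vertices: `m_θ(A∖v) = m_θ(A) - 1`. -/
def zeroSet {n : ℕ} (r : Fin n → ℝ) (lam : Fin n → Fin n → ℝ) (θ : ℝ)
    (A : Finset (Fin n)) : Set (Fin n) :=
  {v | v ∈ A ∧
    (mu r lam A).rootMultiplicity θ = (mu r lam (A.erase v)).rootMultiplicity θ + 1}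

/-- The set `∞_{θ,A}`: `m_θ(A∖v) = m_θ(A) + 1`. -/
def infSet {n : ℕ} (r : Fin n → ℝ) (lam : Fin n → Fin n → ℝ) (θ : ℝ)
    (A : Finset (Fin n)) : Set (Fin n) :=
  {v | v ∈ A ∧
    (mu r lam (A.erase v)).rootMultiplicity θ = (mu r lam A).rootMultiplicity θ + 1}

/-- The set `+_{θ,A}`: `m_θ(A∖v) = m_θ(A)` and `α_v(A)(θ) > 0`. -/
def plusSet {n : ℕ} (r : Fin n → ℝ) (lam : Fin n → Fin n → ℝ) (θ : ℝ)
    (A : Finset (Fin n)) : Set (Fin n) :=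
  {v | v ∈ A ∧
    (mu r lam (A.erase v)).rootMultiplicity θ = (mu r lam A).rootMultiplicity θ ∧
    ∃ t : ℝ, valAt (alpha r lam v A) θ = some t ∧ 0 < t}

/-- The set `−_{θ,A}`: `m_θ(A∖v) = m_θ(A)` and `α_v(A)(θ) < 0`. -/
def minusSet {n : ℕ} (r : Fin n → ℝ) (lam : Fin n → Fin n → ℝ) (θ : ℝ)
    (A : Finset (Fin n)) : Set (Fin n) :=
  {v | v ∈ A ∧
    (mu r lam (A.erase v)).rootMultiplicity θ = (mu r lam A).rootMultiplicity θ ∧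
    ∃ t : ℝ, valAt (alpha r lam v A) θ = some t ∧ t < 0}

/-- The frontier `∂0_{θ,A}`: vertices not in `0_{θ,A}` with a neighbor in `0_{θ,A}`. -/
def frontierZero {n : ℕ} (r : Fin n → ℝ) (lam : Fin n → Fin n → ℝ) (θ : ℝ)
    (A : Finset (Fin n)) : Set (Fin n) :=
  {v | v ∈ A ∧ v ∉ zeroSet r lam θ A ∧ ∃ w ∈ zeroSet r lam θ A, lam v w ≠ 0}

/-- The underlying simple graph: edges are the pairs with nonzero edge weight. -/
def wGraph {n : ℕ} (lam : Fin n → Fin n → ℝ) : SimpleGraph (Fin n) :=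
  SimpleGraph.fromRel fun j k => lam j k ≠ 0

-- ===== new material =====

variable {n : ℕ}

noncomputable def muA (lam : Fin n → Fin n → ℝ) (x : Fin n → ℂ) (A : Finset (Fin n)) : ℂ :=
  ∑ M ∈ matchings lam A, (∏ i ∈ A \ mVerts M, x i) * ∏ e ∈ M, (lam e.1 e.2 : ℂ)

lemma muC_eq (lam : Fin n → Fin n → ℝ) (x : Fin n → ℂ) :
    muC lam x = muA lam x Finset.univ := rfl

lemma mem_matchings {lam : Fin n → Fin n → ℝ} {A : Finset (Fin n)}
    {M : Finset (Fin n × Fin n)} : M ∈ matchings lam A ↔ IsMatching lam A M := by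
  simp [matchings]

lemma mem_mVerts {M : Finset (Fin n × Fin n)} {i : Fin n} :
    i ∈ mVerts M ↔ ∃ e ∈ M, e.1 = i ∨ e.2 = i := by
  simp only [mVerts, Finset.mem_union, Finset.mem_image]
  aesop

lemma matchings_empty (lam : Fin n → Fin n → ℝ) : matchings lam ∅ = {∅} := by
  ext M
  simp only [mem_matchings, IsMatching, Finset.mem_singleton]
  constructor
  · rintro ⟨h1, _⟩
    rw [Finset.eq_empty_iff_forall_notMem]
    intro e he
    exact absurd (h1 e he).2.2.1 (Finset.notMem_empty _)
  · rintro rfl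
    exact ⟨by simp, by simp⟩

lemma muA_empty (lam : Fin n → Fin n → ℝ) (x : Fin n → ℂ) : muA lam x ∅ = 1 := by
  simp [muA, matchings_empty, mVerts]

/-- the edge pair with endpoints v, u in increasing order -/
def pr (v u : Fin n) : Fin n × Fin n := if v < u then (v, u) else (u, v)

lemma pr_cases {v u : Fin n} (h : v ≠ u) :
    pr v u = (v, u) ∧ v < u ∨ pr v u = (u, v) ∧ u < v := by
  unfold pr
  rcases lt_trichotomy v u with h1 | h1 | h1
  · exact Or.inl ⟨if_pos h1, h1⟩
  · exact absurd h1 h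
  · exact Or.inr ⟨if_neg (not_lt.2 h1.le), h1⟩

lemma matching_facts {lam : Fin n → Fin n → ℝ} {A : Finset (Fin n)} {u v : Fin n}
    {M' : Finset (Fin n × Fin n)} (h : IsMatching lam ((A.erase v).erase u) M') :
    ∀ f ∈ M', f.1 ≠ v ∧ f.2 ≠ v ∧ f.1 ≠ u ∧ f.2 ≠ u := by
  intro f hf
  have h1 := (h.1 f hf).2.2.1
  have h2 := (h.1 f hf).2.2.2
  simp only [Finset.mem_erase] at h1 h2
  exact ⟨h1.2.1, h2.2.1, h1.1, h2.1⟩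

lemma pr_not_mem {lam : Fin n → Fin n → ℝ} {A : Finset (Fin n)} {u v w : Fin n}
    {M' : Finset (Fin n × Fin n)} (h : IsMatching lam ((A.erase v).erase u) M')
    (hvw : v ≠ w) : pr v w ∉ M' := by
  intro hmem
  have hf := matching_facts h _ hmem
  rcases pr_cases hvw with ⟨he, _⟩ | ⟨he, _⟩ <;> rw [he] at hf
  · exact hf.1 rfl
  · exact hf.2.1 rfl

lemma pr_inj {v u u' : Fin n} (h : v ≠ u) (h' : v ≠ u') (heq : pr v u = pr v u') : u = u' := by
  rcases pr_cases h with ⟨he, _⟩ | ⟨he, hlt⟩ <;> rcases pr_cases h' with ⟨he', _⟩ | ⟨he', hlt'⟩ <;>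
      rw [he, he'] at heq <;> obtain ⟨a, b⟩ := Prod.mk.injEq .. ▸ heq
  · exact b
  · exact b.trans a
  · exact absurd a.symm h
  · exact a

lemma pr_ne {v u : Fin n} (h : v ≠ u) {a : Fin n} (ha1 : a ≠ v) (ha2 : a ≠ u) :
    (pr v u).1 ≠ a ∧ (pr v u).2 ≠ a := by
  rcases pr_cases h with ⟨he, _⟩ | ⟨he, _⟩ <;> rw [he] <;>
    exact ⟨fun hh => (by simp_all : False), fun hh => (by simp_all : False)⟩

lemma mVerts_insert (e : Fin n × Fin n) (M : Finset (Fin n × Fin n)) :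
    mVerts (insert e M) = insert e.1 (insert e.2 (mVerts M)) := by
  ext a
  simp only [mVerts, Finset.image_insert, Finset.mem_union, Finset.mem_insert]
  tauto

lemma muA_rec (lam : Fin n → Fin n → ℝ) (hsym : ∀ j k, lam j k = lam k j)
    (x : Fin n → ℂ) {A : Finset (Fin n)} {v : Fin n} (hv : v ∈ A) :
    muA lam x A = x v * muA lam x (A.erase v)
      + ∑ u ∈ A.erase v, (lam v u : ℂ) * muA lam x ((A.erase v).erase u) := by
  classical
  rw [muA, ← Finset.sum_filter_add_sum_filter_not (matchings lam A) (fun M => v ∈ mVerts M),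
    add_comm]
  congr 1
  · -- matchings avoiding v
    have hset : (matchings lam A).filter (fun M => ¬ v ∈ mVerts M)
        = matchings lam (A.erase v) := by
      ext M
      simp only [Finset.mem_filter, mem_matchings, IsMatching, mem_mVerts, not_exists]
      constructor
      · rintro ⟨⟨h1, h2⟩, h3⟩
        refine ⟨fun e he => ⟨(h1 e he).1, (h1 e he).2.1, ?_, ?_⟩, h2⟩
        · exact Finset.mem_erase.2 ⟨fun h => h3 e ⟨he, Or.inl h⟩, (h1 e he).2.2.1⟩
        · exact Finset.mem_erase.2 ⟨fun h => h3 e ⟨he, Or.inr h⟩, (h1 e he).2.2.2⟩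
      · rintro ⟨h1, h2⟩
        refine ⟨⟨fun e he => ⟨(h1 e he).1, (h1 e he).2.1,
            Finset.mem_of_mem_erase (h1 e he).2.2.1, Finset.mem_of_mem_erase (h1 e he).2.2.2⟩,
            h2⟩, ?_⟩
        rintro e ⟨he, h⟩
        rcases h with h | h
        · exact (Finset.mem_erase.1 (h1 e he).2.2.1).1 h
        · exact (Finset.mem_erase.1 (h1 e he).2.2.2).1 h
    rw [hset, muA, Finset.mul_sum]
    refine Finset.sum_congr rfl (fun M hM => ?_)
    have hvM : v ∉ mVerts M := by
      rw [mem_matchings] at hM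
      rw [mem_mVerts]
      rintro ⟨e, he, h⟩
      rcases h with h | h
      · exact (Finset.mem_erase.1 (hM.1 e he).2.2.1).1 h
      · exact (Finset.mem_erase.1 (hM.1 e he).2.2.2).1 h
    have hA : A \ mVerts M = insert v ((A.erase v) \ mVerts M) := by
      ext a
      by_cases hav : a = v
      · subst hav; simp [hv, hvM]
      · simp [hav, Finset.mem_erase]
    rw [hA, Finset.prod_insert (by simp [Finset.mem_sdiff])]
    ring
  · -- matchings covering v
    have hfil : ∀ u ∈ A.erase v, (lam v u : ℂ) * muA lam x ((A.erase v).erase u) ≠ 0 →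
        lam v u ≠ 0 := by
      intro u _ h h0
      simp [h0] at h
    rw [← Finset.sum_filter_of_ne hfil]
    have hexp : ∀ u ∈ (A.erase v).filter (fun u => lam v u ≠ 0),
        (lam v u : ℂ) * muA lam x ((A.erase v).erase u)
          = ∑ M' ∈ matchings lam ((A.erase v).erase u),
              (∏ i ∈ ((A.erase v).erase u) \ mVerts M', x i)
                * ((lam v u : ℂ) * ∏ e ∈ M', (lam e.1 e.2 : ℂ)) := by
      intro u _
      rw [muA, Finset.mul_sum]
      exact Finset.sum_congr rfl (fun M' _ => by ring)
    rw [Finset.sum_congr rfl hexp, Finset.sum_sigma']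
    refine (Finset.sum_bij (fun (p : (_ : Fin n) × Finset (Fin n × Fin n)) _ =>
      insert (pr v p.1) p.2) ?_ ?_ ?_ ?_).symm
    · -- maps into target
      rintro ⟨u, M'⟩ hp
      simp only [Finset.mem_sigma, Finset.mem_filter, mem_matchings] at hp ⊢
      obtain ⟨⟨hu, hlam⟩, hM'⟩ := hp
      have huA : u ∈ A := Finset.mem_of_mem_erase hu
      have hvu : v ≠ u := fun h => (Finset.mem_erase.1 hu).1 h.symm
      have hprlam : lam (pr v u).1 (pr v u).2 ≠ 0 := by
        rcases pr_cases hvu with ⟨he, _⟩ | ⟨he, _⟩ <;> rw [he]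
        · exact hlam
        · rw [← hsym]; exact hlam
      have hprlt : (pr v u).1 < (pr v u).2 := by
        rcases pr_cases hvu with ⟨he, hlt⟩ | ⟨he, hlt⟩ <;> rw [he] <;> exact hlt
      have hprA : (pr v u).1 ∈ A ∧ (pr v u).2 ∈ A := by
        rcases pr_cases hvu with ⟨he, _⟩ | ⟨he, _⟩ <;> rw [he] <;>
          exact ⟨by assumption, by assumption⟩
      have hfacts := matching_facts hM'
      have hprvu : ((pr v u).1 = v ∧ (pr v u).2 = u) ∨ ((pr v u).1 = u ∧ (pr v u).2 = v) := by
        rcases pr_cases hvu with ⟨he, _⟩ | ⟨he, _⟩ <;> rw [he] <;> simp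
      constructor
      · constructor
        · intro e he
          rcases Finset.mem_insert.1 he with rfl | heM
          · exact ⟨hprlt, hprlam, hprA.1, hprA.2⟩
          · obtain ⟨hl, hn, hA1, hA2⟩ := hM'.1 e heM
            exact ⟨hl, hn, Finset.mem_of_mem_erase (Finset.mem_of_mem_erase hA1),
              Finset.mem_of_mem_erase (Finset.mem_of_mem_erase hA2)⟩
        · intro e he f hf hef
          rcases Finset.mem_insert.1 he with rfl | heM <;>
            rcases Finset.mem_insert.1 hf with rfl | hfM
          · exact absurd rfl hef
          · obtain ⟨f1, f2, f3, f4⟩ := hfacts f hfM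
            obtain ⟨g1, g2⟩ := pr_ne hvu f1 f3
            obtain ⟨g3, g4⟩ := pr_ne hvu f2 f4
            exact ⟨g1, g3, g2, g4⟩
          · obtain ⟨f1, f2, f3, f4⟩ := hfacts e heM
            obtain ⟨g1, g2⟩ := pr_ne hvu f1 f3
            obtain ⟨g3, g4⟩ := pr_ne hvu f2 f4
            exact ⟨g1.symm, g2.symm, g3.symm, g4.symm⟩
          · exact hM'.2 e heM f hfM hef
      · rw [mem_mVerts]
        refine ⟨pr v u, Finset.mem_insert_self _ _, ?_⟩
        rcases hprvu with ⟨h, _⟩ | ⟨_, h⟩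
        · exact Or.inl h
        · exact Or.inr h
    · -- injective
      rintro ⟨u, M'⟩ hp ⟨u', M''⟩ hp' heq
      simp only [Finset.mem_sigma, Finset.mem_filter, mem_matchings] at hp hp'
      obtain ⟨⟨hu, hlam⟩, hM'⟩ := hp
      obtain ⟨⟨hu', hlam'⟩, hM''⟩ := hp'
      have hvu : v ≠ u := fun h => (Finset.mem_erase.1 hu).1 h.symm
      have hvu' : v ≠ u' := fun h => (Finset.mem_erase.1 hu').1 h.symm
      simp only at heq
      have huu' : u = u' := by
        have h1 : pr v u' ∈ insert (pr v u) M' := by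
          rw [heq]; exact Finset.mem_insert_self _ _
        rcases Finset.mem_insert.1 h1 with h | h
        · exact pr_inj hvu hvu' h.symm
        · exact absurd h (pr_not_mem hM' hvu')
      subst huu'
      have hM : M' = M'' := by
        have e1 : pr v u ∉ M' := pr_not_mem hM' hvu
        have e2 : pr v u ∉ M'' := pr_not_mem hM'' hvu
        rw [← Finset.erase_insert e1, ← Finset.erase_insert e2, heq]
      simp [hM]
    · -- surjective
      intro M hM
      simp only [Finset.mem_filter, mem_matchings] at hM
      obtain ⟨hMm, hMv⟩ := hM
      obtain ⟨e, he, hve⟩ := mem_mVerts.1 hMv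
      have helt := (hMm.1 e he).1
      have hene : e.1 ≠ e.2 := ne_of_lt helt
      set u : Fin n := if e.1 = v then e.2 else e.1 with hudef
      have hcase : (e.1 = v ∧ u = e.2) ∨ (e.1 ≠ v ∧ e.2 = v ∧ u = e.1) := by
        by_cases h1 : e.1 = v
        · exact Or.inl ⟨h1, by rw [hudef, if_pos h1]⟩
        · rcases hve with h | h
          · exact absurd h h1
          · exact Or.inr ⟨h1, h, by rw [hudef, if_neg h1]⟩
      have hpre : pr v u = e := by
        rcases hcase with ⟨h1, h2⟩ | ⟨h1, h2, h3⟩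
        · unfold pr
          rw [h2, if_pos (h1 ▸ helt)]
          exact Prod.ext h1.symm rfl
        · unfold pr
          rw [h3, if_neg (by rw [← h2]; exact not_lt.2 helt.le)]
          exact Prod.ext rfl h2.symm
      have hvnu : v ≠ u := by
        rcases hcase with ⟨h1, h2⟩ | ⟨h1, h2, h3⟩
        · rw [h2, ← h1]; exact hene
        · rw [h3, ← h2]; exact hene.symm
      have hlamvu : lam v u ≠ 0 := by
        rcases hcase with ⟨h1, h2⟩ | ⟨h1, h2, h3⟩
        · rw [h2, ← h1]; exact (hMm.1 e he).2.1
        · rw [h3, ← h2, hsym]; exact (hMm.1 e he).2.1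
      have huA : u ∈ A := by
        rcases hcase with ⟨h1, h2⟩ | ⟨h1, h2, h3⟩
        · rw [h2]; exact (hMm.1 e he).2.2.2
        · rw [h3]; exact (hMm.1 e he).2.2.1
      have hvee : e.1 = v ∨ e.2 = v := hve
      have heu : e.1 = u ∨ e.2 = u := by
        rcases hcase with ⟨h1, h2⟩ | ⟨h1, h2, h3⟩
        · exact Or.inr h2.symm
        · exact Or.inl h3.symm
      refine ⟨⟨u, M.erase e⟩, ?_, ?_⟩
      · simp only [Finset.mem_sigma, Finset.mem_filter, mem_matchings]
        refine ⟨⟨Finset.mem_erase.2 ⟨hvnu.symm, huA⟩, hlamvu⟩, ?_, ?_⟩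
        · intro f hf
          obtain ⟨hfe, hfM⟩ := Finset.mem_erase.1 hf
          obtain ⟨hl, hn, hA1, hA2⟩ := hMm.1 f hfM
          obtain ⟨d1, d2, d3, d4⟩ := hMm.2 e he f hfM (Ne.symm hfe)
          refine ⟨hl, hn, ?_, ?_⟩
          · refine Finset.mem_erase.2 ⟨?_, Finset.mem_erase.2 ⟨?_, hA1⟩⟩
            · rcases heu with h | h
              · exact fun hh => d1 (h.trans hh.symm)
              · exact fun hh => d3 (h.trans hh.symm)
            · rcases hvee with h | h
              · exact fun hh => d1 (h.trans hh.symm)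
              · exact fun hh => d3 (h.trans hh.symm)
          · refine Finset.mem_erase.2 ⟨?_, Finset.mem_erase.2 ⟨?_, hA2⟩⟩
            · rcases heu with h | h
              · exact fun hh => d2 (h.trans hh.symm)
              · exact fun hh => d4 (h.trans hh.symm)
            · rcases hvee with h | h
              · exact fun hh => d2 (h.trans hh.symm)
              · exact fun hh => d4 (h.trans hh.symm)
        · intro f hf g hg hfg
          exact hMm.2 f (Finset.mem_of_mem_erase hf) g (Finset.mem_of_mem_erase hg) hfg
      · simp only
        rw [hpre, Finset.insert_erase he]
    · -- values
      rintro ⟨u, M'⟩ hp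
      simp only [Finset.mem_sigma, Finset.mem_filter, mem_matchings] at hp
      obtain ⟨⟨hu, hlam⟩, hM'⟩ := hp
      have hvu : v ≠ u := fun h => (Finset.mem_erase.1 hu).1 h.symm
      have hnm : pr v u ∉ M' := pr_not_mem hM' hvu
      simp only
      rw [Finset.prod_insert hnm]
      have hlampr : (lam (pr v u).1 (pr v u).2 : ℂ) = (lam v u : ℂ) := by
        rcases pr_cases hvu with ⟨he, _⟩ | ⟨he, _⟩ <;> rw [he]
        show ((lam u v : ℝ) : ℂ) = _
        rw [hsym u v]
      have hsets : A \ mVerts (insert (pr v u) M') = ((A.erase v).erase u) \ mVerts M' := by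
        have hprvu : ((pr v u).1 = v ∧ (pr v u).2 = u) ∨ ((pr v u).1 = u ∧ (pr v u).2 = v) := by
          rcases pr_cases hvu with ⟨he, _⟩ | ⟨he, _⟩ <;> rw [he] <;> simp
        ext a
        rw [mVerts_insert]
        rcases hprvu with ⟨h1, h2⟩ | ⟨h1, h2⟩ <;> rw [h1, h2] <;>
          simp only [Finset.mem_sdiff, Finset.mem_insert, Finset.mem_erase] <;>
          push_neg <;> tauto
      rw [hsets, hlampr]

lemma muA_factor (lam : Fin n → Fin n → ℝ) (hsym : ∀ j k, lam j k = lam k j)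
    (x : Fin n → ℂ) {A : Finset (Fin n)} {v : Fin n} (hv : v ∈ A)
    (h0 : ∀ u ∈ A.erase v, muA lam x ((A.erase v).erase u) ≠ 0)
    (h0' : muA lam x (A.erase v) ≠ 0) :
    muA lam x A = muA lam x (A.erase v) *
      (x v + ∑ u ∈ A.erase v, (lam v u : ℂ) /
        (muA lam x (A.erase v) / muA lam x ((A.erase v).erase u))) := by
  rw [muA_rec lam hsym x hv, mul_add, Finset.mul_sum]
  congr 1
  · ring
  refine Finset.sum_congr rfl fun u hu => ?_
  have h1 := h0 u hu
  field_simp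

lemma im_div_nonneg {c : ℝ} (hc : c ≤ 0) {z : ℂ} (hz : 0 < z.im) :
    0 ≤ ((c : ℂ) / z).im := by
  have h1 : ((c : ℂ) / z).im = c * (z⁻¹).im := by
    rw [div_eq_mul_inv, Complex.mul_im]
    simp
  rw [h1, Complex.inv_im]
  have h2 := div_nonpos_of_nonpos_of_nonneg (neg_nonpos.2 hz.le) (Complex.normSq_nonneg z)
  nlinarith

lemma uhp_aux (lam : Fin n → Fin n → ℝ) (hsym : ∀ j k, lam j k = lam k j)
    (hnonpos : ∀ j k, lam j k ≤ 0) (x : Fin n → ℂ) (hx : ∀ i, 0 < (x i).im)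
    (A : Finset (Fin n)) : muA lam x A ≠ 0 ∧
      ∀ v ∈ A, 0 < (muA lam x A / muA lam x (A.erase v)).im := by
  induction A using Finset.strongInduction with
  | _ A ih =>
  rcases Finset.eq_empty_or_nonempty A with rfl | ⟨v0, hv0⟩
  · simp [muA_empty]
  have key : ∀ v ∈ A, muA lam x A ≠ 0 ∧
      0 < (muA lam x A / muA lam x (A.erase v)).im := by
    intro v hv
    set A' := A.erase v with hA'
    have hsub : A' ⊂ A := Finset.erase_ssubset hv
    have ihA' := ih A' hsub
    have h0 : ∀ u ∈ A', muA lam x (A'.erase u) ≠ 0 := fun u hu =>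
      (ih (A'.erase u) (lt_of_le_of_lt (Finset.erase_subset u A') hsub)).1
    have hfac := muA_factor lam hsym x hv h0 ihA'.1
    set α := x v + ∑ u ∈ A', (lam v u : ℂ) /
      (muA lam x A' / muA lam x (A'.erase u)) with hα
    have him : 0 < α.im := by
      rw [hα, Complex.add_im]
      have hsum : 0 ≤ (∑ u ∈ A', (lam v u : ℂ) /
          (muA lam x A' / muA lam x (A'.erase u))).im := by
        rw [Complex.im_sum]
        exact Finset.sum_nonneg fun u hu => im_div_nonneg (hnonpos v u) (ihA'.2 u hu)
      have := hx v
      linarith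
    have hαne : α ≠ 0 := fun h => by simp [h] at him
    refine ⟨hfac ▸ mul_ne_zero ihA'.1 hαne, ?_⟩
    have h2 : muA lam x A / muA lam x (A.erase v) = α := by
      rw [hfac]
      exact mul_div_cancel_left₀ α ihA'.1
    rw [h2]
    exact him
  exact ⟨(key v0 hv0).1, fun v hv => (key v hv).2⟩

lemma abs_div_le {c : ℝ} (hc : c ≤ 0) {z : ℂ} {b : ℝ} (hb : 0 < b)
    (hz : b ≤ ‖z‖) : ‖(c : ℂ) / z‖ ≤ -c / b := by
  rw [norm_div, Complex.norm_real, Real.norm_eq_abs, abs_of_nonpos hc]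
  exact div_le_div_of_nonneg_left (by linarith) hb hz

lemma norm_aux (lam : Fin n → Fin n → ℝ) (hsym : ∀ j k, lam j k = lam k j)
    (hnonpos : ∀ j k, lam j k ≤ 0) (b : ℝ) (hb : 0 < b)
    (hbound : ∀ v : Fin n, ∀ A : Finset (Fin n), A.card < n → v ∈ A →
        ∑ u ∈ A.erase v, -lam v u ≤ b ^ 2)
    (x : Fin n → ℂ) (hx : ∀ i, 2 * b < ‖x i‖)
    (A : Finset (Fin n)) (hcard : A.card < n) : muA lam x A ≠ 0 ∧
      ∀ v ∈ A, b < ‖muA lam x A / muA lam x (A.erase v)‖ := by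
  revert hcard
  induction A using Finset.strongInduction with
  | _ A ih =>
  intro hcard
  rcases Finset.eq_empty_or_nonempty A with rfl | ⟨v0, hv0⟩
  · simp [muA_empty]
  have key : ∀ v ∈ A, muA lam x A ≠ 0 ∧
      b < ‖muA lam x A / muA lam x (A.erase v)‖ := by
    intro v hv
    have hsub : A.erase v ⊂ A := Finset.erase_ssubset hv
    have hcard' : (A.erase v).card < n := lt_of_le_of_lt (Finset.card_le_card (Finset.erase_subset v A)) hcard
    have ihA' := ih (A.erase v) hsub hcard'
    have h0 : ∀ u ∈ A.erase v, muA lam x ((A.erase v).erase u) ≠ 0 := fun u hu =>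
      (ih ((A.erase v).erase u)
        (lt_of_le_of_lt (Finset.erase_subset u (A.erase v)) hsub)
        (lt_of_le_of_lt (Finset.card_le_card (Finset.erase_subset u (A.erase v))) hcard')).1
    have hfac := muA_factor lam hsym x hv h0 ihA'.1
    set S := ∑ u ∈ A.erase v, (lam v u : ℂ) /
      (muA lam x (A.erase v) / muA lam x ((A.erase v).erase u)) with hS
    have hSle : ‖S‖ ≤ b := by
      have h1 : ‖S‖ ≤ ∑ u ∈ A.erase v, ‖(lam v u : ℂ) /
          (muA lam x (A.erase v) / muA lam x ((A.erase v).erase u))‖ := by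
        exact norm_sum_le _ _
      have h2 : ∑ u ∈ A.erase v, ‖(lam v u : ℂ) /
          (muA lam x (A.erase v) / muA lam x ((A.erase v).erase u))‖
          ≤ ∑ u ∈ A.erase v, (-lam v u) / b := by
        refine Finset.sum_le_sum fun u hu => ?_
        exact abs_div_le (hnonpos v u) hb (ihA'.2 u hu).le
      have h3 : ∑ u ∈ A.erase v, (-lam v u) / b ≤ b ^ 2 / b := by
        rw [← Finset.sum_div]
        gcongr
        exact hbound v A hcard hv
      have h4 : b ^ 2 / b = b := by field_simp [hb.ne']
      linarith
    have habs : b < ‖x v + S‖ := by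
      have h1 : ‖x v‖ - ‖S‖ ≤ ‖x v + S‖ := by
        have h2 := norm_add_le (x v + S) (-S)
        rw [add_neg_cancel_right, norm_neg] at h2
        linarith
      have := hx v
      linarith
    have hαne : x v + S ≠ 0 := by
      intro h
      rw [h] at habs
      simp at habs
      linarith
    refine ⟨hfac ▸ mul_ne_zero ihA'.1 hαne, ?_⟩
    have h2 : muA lam x A / muA lam x (A.erase v) = x v + S := by
      rw [hfac]
      exact mul_div_cancel_left₀ _ ihA'.1
    rw [h2]
    exact habs
  exact ⟨(key v0 hv0).1, fun v hv => (key v hv).2⟩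

lemma norm_top (lam : Fin n → Fin n → ℝ) (hsym : ∀ j k, lam j k = lam k j)
    (hnonpos : ∀ j k, lam j k ≤ 0) (b : ℝ) (hb : 0 < b)
    (hbound : ∀ v : Fin n, ∀ A : Finset (Fin n), A.card < n → v ∈ A →
        ∑ u ∈ A.erase v, -lam v u ≤ b ^ 2)
    (hbound2 : ∀ v : Fin n, ∑ u ∈ Finset.univ.erase v, -lam v u ≤ 2 * b ^ 2)
    (x : Fin n → ℂ) (hx : ∀ i, 2 * b < ‖x i‖) (hn : 0 < n) :
    muA lam x Finset.univ ≠ 0 := by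
  set v : Fin n := ⟨0, hn⟩ with hvdef
  have hv : v ∈ Finset.univ := Finset.mem_univ v
  have hcard' : (Finset.univ.erase v).card < n := by
    rw [Finset.card_erase_of_mem hv, Finset.card_univ, Fintype.card_fin]
    omega
  have ihA' := norm_aux lam hsym hnonpos b hb hbound x hx (Finset.univ.erase v) hcard'
  have h0 : ∀ u ∈ Finset.univ.erase v, muA lam x ((Finset.univ.erase v).erase u) ≠ 0 :=
    fun u hu => (norm_aux lam hsym hnonpos b hb hbound x hx _
      (lt_of_le_of_lt (Finset.card_le_card (Finset.erase_subset u _)) hcard')).1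
  have hfac := muA_factor lam hsym x hv h0 ihA'.1
  set S := ∑ u ∈ Finset.univ.erase v, (lam v u : ℂ) /
    (muA lam x (Finset.univ.erase v) / muA lam x ((Finset.univ.erase v).erase u)) with hS
  have hSle : ‖S‖ ≤ 2 * b := by
    have h1 : ‖S‖ ≤ ∑ u ∈ Finset.univ.erase v, ‖(lam v u : ℂ) /
        (muA lam x (Finset.univ.erase v) / muA lam x ((Finset.univ.erase v).erase u))‖ :=
      norm_sum_le _ _
    have h2 : ∑ u ∈ Finset.univ.erase v, ‖(lam v u : ℂ) /
        (muA lam x (Finset.univ.erase v) / muA lam x ((Finset.univ.erase v).erase u))‖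
        ≤ ∑ u ∈ Finset.univ.erase v, (-lam v u) / b :=
      Finset.sum_le_sum fun u hu => abs_div_le (hnonpos v u) hb (ihA'.2 u hu).le
    have h3 : ∑ u ∈ Finset.univ.erase v, (-lam v u) / b ≤ 2 * b ^ 2 / b := by
      rw [← Finset.sum_div]
      gcongr
      exact hbound2 v
    have h4 : 2 * b ^ 2 / b = 2 * b := by field_simp [hb.ne']
    linarith
  have habs : 0 < ‖x v + S‖ := by
    have h1 : ‖x v‖ - ‖S‖ ≤ ‖x v + S‖ := by
      have h2 := norm_add_le (x v + S) (-S)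
      rw [add_neg_cancel_right, norm_neg] at h2
      linarith
    have := hx v
    linarith
  have hαne : x v + S ≠ 0 := by
    intro h
    rw [h] at habs
    simp at habs
  rw [hfac]
  exact mul_ne_zero ihA'.1 (hαne)

lemma muA_of_lam_zero {lam : Fin n → Fin n → ℝ} (h : ∀ j k, j ≠ k → lam j k = 0)
    (x : Fin n → ℂ) (A : Finset (Fin n)) : muA lam x A = ∏ i ∈ A, x i := by
  have hm : matchings lam A = {∅} := by
    ext M
    simp only [mem_matchings, IsMatching, Finset.mem_singleton]
    constructor
    · rintro ⟨h1, _⟩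
      rw [Finset.eq_empty_iff_forall_notMem]
      intro e he
      exact (h1 e he).2.1 (h _ _ (ne_of_lt (h1 e he).1))
    · rintro rfl
      exact ⟨by simp, by simp⟩
  simp [muA, hm, mVerts]

lemma BG_spec (hn : 3 ≤ n) (lam : Fin n → Fin n → ℝ) (hnonpos : ∀ j k, lam j k ≤ 0) :
    (∀ (v : Fin n) (T : Finset (Fin n)), T ⊆ Finset.univ.erase v → T.card ≤ n - 2 →
      ∑ k ∈ T, -lam v k ≤ BG n lam) ∧ 0 ≤ BG n lam := by
  have hbdd : BddAbove {S : ℝ | ∃ j : Fin n, ∃ A : Finset (Fin n),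
      j ∉ A ∧ A.card = n - 2 ∧ S = ∑ k ∈ A, -lam j k} := by
    refine Set.Finite.bddAbove (Set.Finite.subset
      (Set.finite_range fun p : Fin n × Finset (Fin n) => ∑ k ∈ p.2, -lam p.1 k) ?_)
    rintro S ⟨j, T, _, _, rfl⟩
    exact ⟨(j, T), rfl⟩
  have hcarde : ∀ v : Fin n, (Finset.univ.erase v).card = n - 1 := by
    intro v
    rw [Finset.card_erase_of_mem (Finset.mem_univ v), Finset.card_univ, Fintype.card_fin]
  have hmem : ∀ (v : Fin n) (T : Finset (Fin n)), T ⊆ Finset.univ.erase v →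
      T.card ≤ n - 2 → ∑ k ∈ T, -lam v k ≤ BG n lam := by
    intro v T hTsub hTcard
    obtain ⟨T', hTT', hT'sub, hT'card⟩ :=
      Finset.exists_subsuperset_card_eq hTsub hTcard (by rw [hcarde]; omega)
    have h1 : ∑ k ∈ T, -lam v k ≤ ∑ k ∈ T', -lam v k :=
      Finset.sum_le_sum_of_subset_of_nonneg hTT' fun k _ _ => neg_nonneg.2 (hnonpos v k)
    have h2 : ∑ k ∈ T', -lam v k ≤ BG n lam := by
      rw [BG, if_pos hn]
      exact le_csSup hbdd ⟨v, T', fun h => (Finset.mem_erase.1 (hT'sub h)).1 rfl, hT'card, rfl⟩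
    linarith
  refine ⟨hmem, ?_⟩
  have h0 := hmem ⟨0, by omega⟩ ∅ (Finset.empty_subset _) (by simp)
  simpa using h0

lemma muA_univ_one (lam : Fin 1 → Fin 1 → ℝ) (hsym : ∀ j k, lam j k = lam k j)
    (x : Fin 1 → ℂ) : muA lam x Finset.univ = x 0 := by
  rw [muA_rec lam hsym x (Finset.mem_univ 0)]
  have h1 : (Finset.univ.erase (0 : Fin 1)) = ∅ := by decide
  rw [h1, muA_empty]
  simp

lemma muA_univ_two (lam : Fin 2 → Fin 2 → ℝ) (hsym : ∀ j k, lam j k = lam k j)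
    (x : Fin 2 → ℂ) : muA lam x Finset.univ = x 0 * x 1 + lam 0 1 := by
  rw [muA_rec lam hsym x (Finset.mem_univ 0)]
  have h1 : (Finset.univ.erase (0 : Fin 2)) = {1} := by decide
  have h2 : ({1} : Finset (Fin 2)).erase (1 : Fin 2) = ∅ := by decide
  rw [h1]
  rw [muA_rec lam hsym x (Finset.mem_singleton_self (1 : Fin 2))]
  rw [h2, muA_empty]
  simp [muA_empty]

theorem stmt_0' (n : ℕ) (hn : 0 < n) (lam : Fin n → Fin n → ℝ)
    (hsym : ∀ j k, lam j k = lam k j) (hnonpos : ∀ j k, lam j k ≤ 0)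
    (hdiag : ∀ i, lam i i = 0) (x : Fin n → ℂ)
    (hx : (∀ i, 0 < (x i).im) ∨ (∀ i, 2 * Real.sqrt (BG n lam) < ‖x i‖)) :
    muC lam x ≠ 0 := by
  rw [muC_eq]
  rcases hx with hx | hx
  · exact (uhp_aux lam hsym hnonpos x hx Finset.univ).1
  rcases le_or_gt 3 n with h3 | h3
  · obtain ⟨hmem, hBG0⟩ := BG_spec h3 lam hnonpos
    rcases eq_or_lt_of_le hBG0 with hB0 | hBpos
    · -- BG = 0 : all off-diagonal weights vanish
      have hzero : ∀ j k, j ≠ k → lam j k = 0 := by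
        intro j k hjk
        have hsub : ({k} : Finset (Fin n)) ⊆ Finset.univ.erase j := by
          intro a ha
          rw [Finset.mem_singleton] at ha
          subst ha
          exact Finset.mem_erase.2 ⟨Ne.symm hjk, Finset.mem_univ a⟩
        have h1 := hmem j {k} hsub (by simp; omega)
        rw [Finset.sum_singleton, ← hB0] at h1
        have := hnonpos j k
        linarith
      rw [muA_of_lam_zero hzero]
      refine Finset.prod_ne_zero_iff.2 fun i _ => ?_
      have h2 := hx i
      rw [← hB0, Real.sqrt_zero, mul_zero] at h2
      intro h
      rw [h] at h2
      simp at h2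
    · set b := Real.sqrt (BG n lam) with hbdef
      have hb : 0 < b := Real.sqrt_pos.2 hBpos
      have hb2 : b ^ 2 = BG n lam := Real.sq_sqrt hBG0
      refine norm_top lam hsym hnonpos b hb ?_ ?_ x hx (by omega)
      · intro v A hA hvA
        rw [hb2]
        refine hmem v (A.erase v) (Finset.erase_subset_erase v (Finset.subset_univ A)) ?_
        rw [Finset.card_erase_of_mem hvA]
        omega
      · intro v
        have hcarde : (Finset.univ.erase v).card = n - 1 := by
          rw [Finset.card_erase_of_mem (Finset.mem_univ v), Finset.card_univ, Fintype.card_fin]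
        have hne : (Finset.univ.erase v).Nonempty := Finset.card_pos.1 (by omega)
        obtain ⟨u0, hu0⟩ := hne
        have hsplit : ∑ u ∈ Finset.univ.erase v, -lam v u
            = -lam v u0 + ∑ u ∈ (Finset.univ.erase v).erase u0, -lam v u :=
          (Finset.add_sum_erase _ _ hu0).symm
        have hA : ∑ u ∈ (Finset.univ.erase v).erase u0, -lam v u ≤ BG n lam := by
          refine hmem v _ (Finset.erase_subset _ _) ?_
          rw [Finset.card_erase_of_mem hu0, hcarde]
          omega
        have hB : -lam v u0 ≤ BG n lam := by
          have hsub : ({u0} : Finset (Fin n)) ⊆ Finset.univ.erase v := by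
            intro a ha
            rw [Finset.mem_singleton] at ha
            subst ha
            exact hu0
          have h1 := hmem v {u0} hsub (by simp; omega)
          rwa [Finset.sum_singleton] at h1
        rw [hb2, hsplit]
        linarith
  · interval_cases n
    · -- n = 1
      rw [muA_univ_one lam hsym x]
      have h2 := hx 0
      have hBG : BG 1 lam = 0 := by simp [BG]
      rw [hBG, Real.sqrt_zero, mul_zero] at h2
      intro h
      rw [h] at h2
      simp at h2
    · -- n = 2
      rw [muA_univ_two lam hsym x]
      set c := -lam 0 1 with hc
      have hc0 : 0 ≤ c := neg_nonneg.2 (hnonpos 0 1)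
      have hBG : BG 2 lam = c / 4 := by
        rw [BG, if_neg (by norm_num), dif_pos rfl, hc]
        norm_num
      have h4 : (2:ℝ) = Real.sqrt 4 := by
        rw [show (4:ℝ) = 2^2 by norm_num, Real.sqrt_sq (by norm_num : (0:ℝ) ≤ 2)]
      have hs : 2 * Real.sqrt (BG 2 lam) = Real.sqrt c := by
        rw [hBG, h4, ← Real.sqrt_mul (by norm_num : (0:ℝ) ≤ 4) (c/4)]
        congr 1
        ring
      have hx0 := hx 0
      have hx1 := hx 1
      rw [hs] at hx0 hx1
      intro h
      have h1 : x 0 * x 1 = -(lam 0 1 : ℂ) := by linear_combination h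
      have h2 : ‖x 0‖ * ‖x 1‖ = c := by
        rw [← norm_mul, h1, ← Complex.ofReal_neg, Complex.norm_real, Real.norm_eq_abs, hc, abs_of_nonneg hc0]
      have h3 : Real.sqrt c * Real.sqrt c < ‖x 0‖ * ‖x 1‖ :=
        mul_lt_mul'' hx0 hx1 (Real.sqrt_nonneg c) (Real.sqrt_nonneg c)
      rw [Real.mul_self_sqrt hc0, h2] at h3
      exact lt_irrefl _ h3

/-- (Heilmann–Lieb) If `Im(x i) > 0` for every vertex `i`, or
`|x i| > 2√(B_G)` for every vertex `i`, then `μ(G)(x₁,…,xₙ) ≠ 0`. -/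
theorem stmt_0 (n : ℕ) (hn : 0 < n) (lam : Fin n → Fin n → ℝ)
    (hsym : ∀ j k, lam j k = lam k j) (hnonpos : ∀ j k, lam j k ≤ 0)
    (hdiag : ∀ i, lam i i = 0) (x : Fin n → ℂ)
    (hx : (∀ i, 0 < (x i).im) ∨ (∀ i, 2 * Real.sqrt (BG n lam) < ‖x i‖)) :
    muC lam x ≠ 0 := by
  exact stmt_0' n hn lam hsym hnonpos hdiag x hx
end

section
/- (Christoffel–Darboux identity) For any weighted graph G and any two distinct vertices i and j, the polynomial identity μ(G∖i)(x)·μ(G∖j)(x) − μ(G∖{i,j})(x)·μ(G)(x) = Σ_{c ∈ [i→j]} λ_c · μ(G∖c)(x)² holds. -/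
open Polynomial
open scoped Classical

namespace CDproof

variable {n : ℕ}

lemma mem_matchings {lam : Fin n → Fin n → ℝ} {A : Finset (Fin n)}
    {M : Finset (Fin n × Fin n)} : M ∈ matchings lam A ↔ IsMatching lam A M := by
  simp [matchings]

lemma mem_mVerts {M : Finset (Fin n × Fin n)} {v : Fin n} :
    v ∈ mVerts M ↔ ∃ e ∈ M, e.1 = v ∨ e.2 = v := by
  simp only [mVerts, Finset.mem_union, Finset.mem_image]
  constructor
  · rintro (⟨e, he, h⟩ | ⟨e, he, h⟩)
    · exact ⟨e, he, Or.inl h⟩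
    · exact ⟨e, he, Or.inr h⟩
  · rintro ⟨e, he, (h | h)⟩
    · exact Or.inl ⟨e, he, h⟩
    · exact Or.inr ⟨e, he, h⟩

lemma isMatching_erase_iff {lam : Fin n → Fin n → ℝ} {A : Finset (Fin n)} {i : Fin n}
    {M : Finset (Fin n × Fin n)} :
    IsMatching lam (A.erase i) M ↔ IsMatching lam A M ∧ i ∉ mVerts M := by
  constructor
  · rintro ⟨h1, h2⟩
    refine ⟨⟨fun e he => ?_, h2⟩, ?_⟩
    · obtain ⟨a, b, c, d⟩ := h1 e he
      exact ⟨a, b, Finset.mem_of_mem_erase c, Finset.mem_of_mem_erase d⟩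
    · rw [mem_mVerts]
      rintro ⟨e, he, (h | h)⟩
      · exact (Finset.mem_erase.mp (h1 e he).2.2.1).1 h
      · exact (Finset.mem_erase.mp (h1 e he).2.2.2).1 h
  · rintro ⟨⟨h1, h2⟩, hv⟩
    refine ⟨fun e he => ?_, h2⟩
    obtain ⟨a, b, c, d⟩ := h1 e he
    refine ⟨a, b, Finset.mem_erase.mpr ⟨fun h => hv (mem_mVerts.mpr ⟨e, he, Or.inl h⟩), c⟩,
      Finset.mem_erase.mpr ⟨fun h => hv (mem_mVerts.mpr ⟨e, he, Or.inr h⟩), d⟩⟩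

lemma sdiff_eq_insert {A S : Finset (Fin n)} {i : Fin n} (hi : i ∈ A) (hiS : i ∉ S) :
    A \ S = insert i ((A.erase i) \ S) := by
  ext v
  simp only [Finset.mem_sdiff, Finset.mem_insert, Finset.mem_erase]
  constructor
  · rintro ⟨hv, hvS⟩
    by_cases h : v = i
    · exact Or.inl h
    · exact Or.inr ⟨⟨h, hv⟩, hvS⟩
  · rintro (rfl | ⟨⟨_, hv⟩, hvS⟩)
    · exact ⟨hi, hiS⟩
    · exact ⟨hv, hvS⟩

/-- The ordered pair of an edge. -/
def prE (i k : Fin n) : Fin n × Fin n := if i < k then (i, k) else (k, i)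

lemma prE_cases {i k : Fin n} (hik : i ≠ k) :
    (prE i k = (i, k) ∧ i < k) ∨ (prE i k = (k, i) ∧ k < i) := by
  rcases lt_or_gt_of_ne hik with h | h
  · exact Or.inl ⟨if_pos h, h⟩
  · exact Or.inr ⟨if_neg (not_lt_of_gt h), h⟩

lemma mVerts_insert {e : Fin n × Fin n} {M : Finset (Fin n × Fin n)} :
    mVerts (insert e M) = insert e.1 (insert e.2 (mVerts M)) := by
  ext v
  simp only [mem_mVerts, Finset.mem_insert, mem_mVerts]
  constructor
  · rintro ⟨f, hf, h⟩
    rcases hf with rfl | hf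
    · rcases h with h | h
      · exact Or.inl h.symm
      · exact Or.inr (Or.inl h.symm)
    · exact Or.inr (Or.inr ⟨f, hf, h⟩)
  · rintro (rfl | rfl | ⟨f, hf, h⟩)
    · exact ⟨e, Or.inl rfl, Or.inl rfl⟩
    · exact ⟨e, Or.inl rfl, Or.inr rfl⟩
    · exact ⟨f, Or.inr hf, h⟩


end CDproof


namespace CDproof

variable {n : ℕ}

lemma prE_mem_verts {i k : Fin n} (hik : i ≠ k) {M : Finset (Fin n × Fin n)}
    (h : prE i k ∈ M) : i ∈ mVerts M := by
  rcases prE_cases hik with ⟨he, -⟩ | ⟨he, -⟩ <;> rw [he] at h <;>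
    [exact mem_mVerts.mpr ⟨(i, k), h, Or.inl rfl⟩;
     exact mem_mVerts.mpr ⟨(k, i), h, Or.inr rfl⟩]

lemma prE_inj {i k₁ k₂ : Fin n} (h1 : i ≠ k₁) (h2 : i ≠ k₂) (h : prE i k₁ = prE i k₂) :
    k₁ = k₂ := by
  rcases prE_cases h1 with ⟨e1, -⟩ | ⟨e1, -⟩ <;> rcases prE_cases h2 with ⟨e2, -⟩ | ⟨e2, -⟩ <;>
      rw [e1, e2, Prod.mk.injEq] at h
  · exact h.2
  · exact absurd h.1 h2
  · exact absurd h.1.symm h1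
  · exact h.1

lemma isMatching_insert {lam : Fin n → Fin n → ℝ} (hsym : ∀ j k, lam j k = lam k j)
    {A : Finset (Fin n)} {i k : Fin n} {M' : Finset (Fin n × Fin n)}
    (hik : i ≠ k) (hlam : lam i k ≠ 0) (hiA : i ∈ A) (hkA : k ∈ A)
    (hM' : IsMatching lam ((A.erase i).erase k) M') :
    IsMatching lam A (insert (prE i k) M') := by
  obtain ⟨h1, h2⟩ := hM'
  have hMe : ∀ f ∈ M', f.1 ≠ i ∧ f.1 ≠ k ∧ f.2 ≠ i ∧ f.2 ≠ k := by
    intro f hf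
    obtain ⟨-, -, hc, hd⟩ := h1 f hf
    rw [Finset.mem_erase, Finset.mem_erase] at hc hd
    exact ⟨hc.2.1, hc.1, hd.2.1, hd.1⟩
  have hEedge : (prE i k).1 < (prE i k).2 ∧ lam (prE i k).1 (prE i k).2 ≠ 0 ∧
      (prE i k).1 ∈ A ∧ (prE i k).2 ∈ A := by
    rcases prE_cases hik with ⟨h, hlt⟩ | ⟨h, hlt⟩ <;> rw [h]
    · exact ⟨hlt, hlam, hiA, hkA⟩
    · exact ⟨hlt, fun hz => hlam (by rw [hsym i k, hz]), hkA, hiA⟩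
  constructor
  · intro f hf
    rcases Finset.mem_insert.mp hf with rfl | hf
    · exact hEedge
    · obtain ⟨a, b, c, d⟩ := h1 f hf
      exact ⟨a, b, Finset.mem_of_mem_erase (Finset.mem_of_mem_erase c),
        Finset.mem_of_mem_erase (Finset.mem_of_mem_erase d)⟩
  · intro f hf g hg hfg
    rcases Finset.mem_insert.mp hf with rfl | hf <;> rcases Finset.mem_insert.mp hg with rfl | hg
    · exact absurd rfl hfg
    · obtain ⟨q1, q2, q3, q4⟩ := hMe g hg
      rcases prE_cases hik with ⟨h, -⟩ | ⟨h, -⟩ <;> rw [h]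
      · exact ⟨Ne.symm q1, Ne.symm q3, Ne.symm q2, Ne.symm q4⟩
      · exact ⟨Ne.symm q2, Ne.symm q4, Ne.symm q1, Ne.symm q3⟩
    · obtain ⟨q1, q2, q3, q4⟩ := hMe f hf
      rcases prE_cases hik with ⟨h, -⟩ | ⟨h, -⟩ <;> rw [h]
      · exact ⟨q1, q2, q3, q4⟩
      · exact ⟨q2, q1, q4, q3⟩
    · exact h2 f hf g hg hfg

lemma prE_not_mem {i k : Fin n} (hik : i ≠ k) {M : Finset (Fin n × Fin n)}
    (hi : i ∉ mVerts M) : prE i k ∉ M :=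
  fun h => hi (prE_mem_verts hik h)

lemma not_mem_verts_of_matching {lam : Fin n → Fin n → ℝ} {A : Finset (Fin n)} {i k : Fin n}
    {M : Finset (Fin n × Fin n)} (hM : IsMatching lam ((A.erase i).erase k) M) :
    i ∉ mVerts M ∧ k ∉ mVerts M := by
  have h1 := isMatching_erase_iff.mp hM
  have h2 := isMatching_erase_iff.mp h1.1
  exact ⟨h2.2, h1.2⟩

lemma sdiff_insert₂ (A S : Finset (Fin n)) (a b : Fin n) :
    A \ insert a (insert b S) = ((A.erase a).erase b) \ S := by
  ext v
  simp only [Finset.mem_sdiff, Finset.mem_erase, Finset.mem_insert]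
  tauto



lemma isMatching_erase_edge {lam : Fin n → Fin n → ℝ} {A : Finset (Fin n)}
    {M : Finset (Fin n × Fin n)} (hM : IsMatching lam A M) {e : Fin n × Fin n} (he : e ∈ M) :
    IsMatching lam ((A.erase e.1).erase e.2) (M.erase e) := by
  obtain ⟨h1, h2⟩ := hM
  constructor
  · intro f hf
    obtain ⟨hfe, hfM⟩ := Finset.mem_erase.mp hf
    obtain ⟨a, b, c, d⟩ := h1 f hfM
    obtain ⟨q1, q2, q3, q4⟩ := h2 f hfM e he hfe
    exact ⟨a, b, Finset.mem_erase.mpr ⟨q2, Finset.mem_erase.mpr ⟨q1, c⟩⟩,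
      Finset.mem_erase.mpr ⟨q4, Finset.mem_erase.mpr ⟨q3, d⟩⟩⟩
  · intro f hf g hg hfg
    exact h2 f (Finset.mem_of_mem_erase hf) g (Finset.mem_of_mem_erase hg) hfg

lemma mu_expand (r : Fin n → ℝ) (lam : Fin n → Fin n → ℝ)
    (hsym : ∀ j k, lam j k = lam k j) {A : Finset (Fin n)} {i : Fin n} (hi : i ∈ A) :
    mu r lam A = (X - C (r i)) * mu r lam (A.erase i)
      + ∑ k ∈ A.erase i, C (lam i k) * mu r lam ((A.erase i).erase k) := by
  have hfilter : (matchings lam A).filter (fun M => ¬ i ∈ mVerts M)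
      = matchings lam (A.erase i) := by
    ext M
    simp only [Finset.mem_filter, mem_matchings]
    rw [isMatching_erase_iff]
  rw [mu, ← Finset.sum_filter_add_sum_filter_not (matchings lam A) (fun M => i ∈ mVerts M),
    add_comm ((X - C (r i)) * mu r lam (A.erase i))]
  congr 1
  · -- matchings covering i
    have hrhs : ∑ k ∈ A.erase i, C (lam i k) * mu r lam ((A.erase i).erase k)
        = ∑ k ∈ (A.erase i).filter (fun k => lam i k ≠ 0),
            C (lam i k) * mu r lam ((A.erase i).erase k) := by
      refine (Finset.sum_subset (Finset.filter_subset _ _) fun k hk hk' => ?_).symm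
      have hz : lam i k = 0 := by
        by_contra h
        exact hk' (Finset.mem_filter.mpr ⟨hk, h⟩)
      rw [hz, map_zero, zero_mul]
    rw [hrhs]
    simp only [mu, Finset.mul_sum]
    rw [Finset.sum_sigma']
    refine (Finset.sum_bij (fun p _ => insert (prE i p.1) p.2) ?_ ?_ ?_ ?_).symm
    · -- maps to
      rintro ⟨k, M'⟩ hp
      rw [Finset.mem_sigma, Finset.mem_filter] at hp
      obtain ⟨⟨hk, hlamik⟩, hM'⟩ := hp
      rw [mem_matchings] at hM'
      have hik : i ≠ k := (Finset.mem_erase.mp hk).1.symm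
      refine Finset.mem_filter.mpr ⟨mem_matchings.mpr
        (isMatching_insert hsym hik hlamik hi (Finset.mem_of_mem_erase hk) hM'), ?_⟩
      exact prE_mem_verts hik (Finset.mem_insert_self _ _)
    · -- injective
      rintro ⟨k₁, M₁⟩ h₁ ⟨k₂, M₂⟩ h₂ heq
      dsimp only at heq
      rw [Finset.mem_sigma, Finset.mem_filter] at h₁ h₂
      have hik₁ : i ≠ k₁ := (Finset.mem_erase.mp h₁.1.1).1.symm
      have hik₂ : i ≠ k₂ := (Finset.mem_erase.mp h₂.1.1).1.symm
      have hv₁ := not_mem_verts_of_matching (mem_matchings.mp h₁.2)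
      have hv₂ := not_mem_verts_of_matching (mem_matchings.mp h₂.2)
      have hmem : prE i k₁ ∈ insert (prE i k₂) M₂ := by
        rw [← heq]; exact Finset.mem_insert_self _ _
      have hee : prE i k₁ = prE i k₂ := by
        rcases Finset.mem_insert.mp hmem with h | h
        · exact h
        · exact absurd (prE_mem_verts hik₁ h) hv₂.1
      have hkk : k₁ = k₂ := prE_inj hik₁ hik₂ hee
      subst hkk
      have hMM : M₁ = M₂ := by
        rw [← Finset.erase_insert (prE_not_mem hik₁ hv₁.1) (s := M₁), heq,
          Finset.erase_insert (prE_not_mem hik₁ hv₂.1)]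
      rw [hMM]
    · -- surjective
      intro M hM
      rw [Finset.mem_filter, mem_matchings] at hM
      obtain ⟨hMm, hMi⟩ := hM
      obtain ⟨e, he, hor⟩ := mem_mVerts.mp hMi
      obtain ⟨hlt, hlamε, he1A, he2A⟩ := hMm.1 e he
      rcases hor with h1 | h2
      · -- e.1 = i, partner k = e.2
        have hik : i ≠ e.2 := by rw [← h1]; exact ne_of_lt hlt
        have hpr : prE i e.2 = e := by
          rw [prE, if_pos (h1 ▸ hlt)]
          rw [← h1]
        refine ⟨⟨e.2, M.erase e⟩, ?_, ?_⟩
        · rw [Finset.mem_sigma, Finset.mem_filter]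
          refine ⟨⟨Finset.mem_erase.mpr ⟨hik.symm, he2A⟩, ?_⟩, ?_⟩
          · show lam i e.2 ≠ 0
            rw [← h1]; exact hlamε
          · show M.erase e ∈ matchings lam ((A.erase i).erase e.2)
            rw [mem_matchings, ← h1]
            exact isMatching_erase_edge hMm he
        · show insert (prE i e.2) (M.erase e) = M
          rw [hpr, Finset.insert_erase he]
      · -- e.2 = i, partner k = e.1
        have hik : i ≠ e.1 := by rw [← h2]; exact (ne_of_lt hlt).symm
        have hpr : prE i e.1 = e := by
          rw [prE, if_neg (by rw [← h2]; exact lt_asymm hlt)]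
          rw [← h2]
        refine ⟨⟨e.1, M.erase e⟩, ?_, ?_⟩
        · rw [Finset.mem_sigma, Finset.mem_filter]
          refine ⟨⟨Finset.mem_erase.mpr ⟨hik.symm, he1A⟩, ?_⟩, ?_⟩
          · show lam i e.1 ≠ 0
            rw [hsym i e.1, ← h2]; exact hlamε
          · show M.erase e ∈ matchings lam ((A.erase i).erase e.1)
            rw [mem_matchings, Finset.erase_right_comm, ← h2]
            exact isMatching_erase_edge hMm he
        · show insert (prE i e.1) (M.erase e) = M
          rw [hpr, Finset.insert_erase he]
    · -- values
      rintro ⟨k, M'⟩ hp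
      rw [Finset.mem_sigma, Finset.mem_filter] at hp
      obtain ⟨⟨hk, hlamik⟩, hM'⟩ := hp
      rw [mem_matchings] at hM'
      have hik : i ≠ k := (Finset.mem_erase.mp hk).1.symm
      have hvM' := not_mem_verts_of_matching hM'
      have hnm : prE i k ∉ M' := prE_not_mem hik hvM'.1
      have hverts : A \ mVerts (insert (prE i k) M') = ((A.erase i).erase k) \ mVerts M' := by
        rw [mVerts_insert, sdiff_insert₂]
        rcases prE_cases hik with ⟨h, -⟩ | ⟨h, -⟩
        · rw [h]
        · rw [h]
          exact congrArg (· \ mVerts M') Finset.erase_right_comm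
      have hprod : (∏ e ∈ insert (prE i k) M', lam e.1 e.2)
          = lam i k * ∏ e ∈ M', lam e.1 e.2 := by
        rw [Finset.prod_insert hnm]
        rcases prE_cases hik with ⟨h, -⟩ | ⟨h, -⟩
        · rw [h]
        · rw [h]
          exact congrArg (· * ∏ x ∈ M', lam x.1 x.2) (hsym k i)
      rw [hverts, hprod, map_mul]
      ring
  · -- matchings avoiding i
    rw [hfilter]
    simp only [mu, Finset.mul_sum]
    refine Finset.sum_congr rfl fun M hM => ?_
    have hiM : i ∉ mVerts M := (isMatching_erase_iff.mp (mem_matchings.mp hM)).2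
    rw [sdiff_eq_insert hi hiM, Finset.prod_insert (fun h => (Finset.mem_erase.mp
      (Finset.mem_sdiff.mp h).1).1 rfl), mul_assoc]


end CDproof

namespace CDproof

variable {n : ℕ}


lemma pathsSet_finite (lam : Fin n → Fin n → ℝ) (A : Finset (Fin n)) (i j : Fin n) :
    {l : List (Fin n) | IsPathIn lam A i j l}.Finite := by
  refine (List.finite_length_le (Fin n) n).subset fun l hl => ?_
  have := hl.2.1.length_le_card
  simpa using this

noncomputable def pathsF (lam : Fin n → Fin n → ℝ) (A : Finset (Fin n)) (i j : Fin n) :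
    Finset (List (Fin n)) :=
  (pathsSet_finite lam A i j).toFinset

lemma mem_pathsF {lam : Fin n → Fin n → ℝ} {A : Finset (Fin n)} {i j : Fin n}
    {l : List (Fin n)} : l ∈ pathsF lam A i j ↔ IsPathIn lam A i j l :=
  Set.Finite.mem_toFinset _

lemma finsum_paths {M : Type*} [AddCommMonoid M] (lam : Fin n → Fin n → ℝ)
    (A : Finset (Fin n)) (i j : Fin n) (f : List (Fin n) → M) :
    (∑ᶠ l ∈ {l : List (Fin n) | IsPathIn lam A i j l}, f l) = ∑ l ∈ pathsF lam A i j, f l := by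
  rw [← (pathsSet_finite lam A i j).coe_toFinset, finsum_mem_coe_finset]
  rfl

lemma isPathIn_pair {lam : Fin n → Fin n → ℝ} {A : Finset (Fin n)} {i j : Fin n}
    (hi : i ∈ A) (hj : j ∈ A) (hij : i ≠ j) :
    IsPathIn lam A i j [i, j] ↔ lam i j ≠ 0 := by
  constructor
  · intro h
    exact (List.isChain_cons_cons.mp h.2.2.2.2.2).1
  · intro h
    refine ⟨by simp, by simp [hij], ?_, rfl, rfl, List.isChain_cons_cons.mpr ⟨h, List.isChain_singleton _⟩⟩
    intro v hv
    rcases List.mem_pair.mp hv with rfl | rfl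
    · exact hi
    · exact hj

lemma isPathIn_cons {lam : Fin n → Fin n → ℝ} {A : Finset (Fin n)} {i j k : Fin n}
    {c : List (Fin n)} (hiA : i ∈ A) (hik : lam i k ≠ 0)
    (hc : IsPathIn lam (A.erase i) k j c) : IsPathIn lam A i j (i :: c) := by
  obtain ⟨hne, hnd, hmem, hh, hl, hch⟩ := hc
  have hic : i ∉ c := fun h => (Finset.mem_erase.mp (hmem i h)).1 rfl
  refine ⟨by simp, List.nodup_cons.mpr ⟨hic, hnd⟩, ?_, rfl, ?_, ?_⟩
  · intro v hv
    rcases List.mem_cons.mp hv with rfl | hv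
    · exact hiA
    · exact Finset.mem_of_mem_erase (hmem v hv)
  · cases c with
    | nil => exact absurd rfl hne
    | cons b t => rw [List.getLast?_cons_cons]; exact hl
  · show List.IsChain _ (i :: c); rw [List.isChain_cons]
    refine ⟨?_, hch⟩
    intro y hy
    rw [hh, Option.mem_some_iff] at hy
    exact hy ▸ hik

lemma isPathIn_cases {lam : Fin n → Fin n → ℝ} {A : Finset (Fin n)} {i j : Fin n}
    {l : List (Fin n)} (hij : i ≠ j) (h : IsPathIn lam A i j l) :
    l = [i, j] ∨ ∃ k c, k ≠ j ∧ lam i k ≠ 0 ∧ IsPathIn lam (A.erase i) k j c ∧ l = i :: c := by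
  obtain ⟨hne, hnd, hmem, hh, hl, hch⟩ := h
  cases l with
  | nil => exact absurd rfl hne
  | cons a c =>
    have ha : a = i := by simpa using hh
    subst ha
    cases c with
    | nil =>
      exfalso
      have : a = j := by simpa using hl
      exact hij this
    | cons b t =>
      have hnd' := List.nodup_cons.mp hnd
      have hgl : (b :: t).getLast? = some j := by
        rw [List.getLast?_cons_cons] at hl; exact hl
      have hchain := List.isChain_cons_cons.mp hch
      have hlamab : lam a b ≠ 0 := hchain.1
      have hpath : IsPathIn lam (A.erase a) b j (b :: t) := by
        refine ⟨by simp, hnd'.2, ?_, rfl, hgl, hchain.2⟩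
        intro v hv
        refine Finset.mem_erase.mpr ⟨?_, hmem v (List.mem_cons_of_mem _ hv)⟩
        intro hva
        rw [hva] at hv
        exact hnd'.1 hv
      by_cases hbj : b = j
      · subst hbj
        left
        cases t with
        | nil => rfl
        | cons x s =>
          exfalso
          have hthis : (x :: s).getLast? = some b := by
            rw [List.getLast?_cons_cons] at hgl; exact hgl
          obtain ⟨hne', heqb⟩ := List.mem_getLast?_eq_getLast (Option.mem_def.mpr hthis)
          have hbmem : b ∈ x :: s := heqb ▸ List.getLast_mem hne'
          exact (List.nodup_cons.mp hnd'.2).1 hbmem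
      · exact Or.inr ⟨b, b :: t, hbj, hlamab, hpath, rfl⟩

lemma head_eq_of_path {lam : Fin n → Fin n → ℝ} {A : Finset (Fin n)} {k j : Fin n}
    {c : List (Fin n)} (hc : IsPathIn lam A k j c) : ∃ t, c = k :: t := by
  cases c with
  | nil => exact absurd rfl hc.1
  | cons b t =>
    have : b = k := by simpa using hc.2.2.2.1
    exact ⟨t, by rw [this]⟩

lemma path_sum_decomp {M : Type*} [AddCommMonoid M] {lam : Fin n → Fin n → ℝ}
    {A : Finset (Fin n)} {i j : Fin n} (f : List (Fin n) → M)
    (hi : i ∈ A) (hj : j ∈ A) (hij : i ≠ j) :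
    ∑ l ∈ pathsF lam A i j, f l
      = (if lam i j ≠ 0 then f [i, j] else 0)
        + ∑ p ∈ (((A.erase i).erase j).filter fun k => lam i k ≠ 0).sigma
            (fun k => pathsF lam (A.erase i) k j), f (i :: p.2) := by
  rw [← Finset.sum_filter_add_sum_filter_not (pathsF lam A i j) (fun l => l = [i, j])]
  congr 1
  · rw [Finset.filter_eq', apply_ite (∑ l ∈ ·, f l)]
    by_cases h : lam i j ≠ 0
    · rw [if_pos (mem_pathsF.mpr ((isPathIn_pair hi hj hij).mpr h)), if_pos h,
        Finset.sum_singleton]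
    · rw [if_neg (fun hm => h ((isPathIn_pair hi hj hij).mp (mem_pathsF.mp hm))), if_neg h,
        Finset.sum_empty]
  · refine (Finset.sum_bij (fun p _ => i :: p.2) ?_ ?_ ?_ ?_).symm
    · rintro ⟨k, c⟩ hp
      rw [Finset.mem_sigma, Finset.mem_filter] at hp
      obtain ⟨⟨hk, hlamik⟩, hc⟩ := hp
      rw [mem_pathsF] at hc
      refine Finset.mem_filter.mpr ⟨mem_pathsF.mpr (isPathIn_cons hi hlamik hc), ?_⟩
      intro hcontra
      have hcj : c = [j] := by simpa using hcontra
      have hkj : k = j := by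
        have h' := hc.2.2.2.1
        rw [hcj] at h'
        simpa using h'.symm
      exact (Finset.mem_erase.mp hk).1 hkj
    · rintro ⟨k₁, c₁⟩ h₁ ⟨k₂, c₂⟩ h₂ heq
      dsimp only at heq
      rw [Finset.mem_sigma, Finset.mem_filter] at h₁ h₂
      have hc₁ := mem_pathsF.mp h₁.2
      have hc₂ := mem_pathsF.mp h₂.2
      have hcc : c₁ = c₂ := by simpa using heq
      have hkk : k₁ = k₂ := by
        have e1 := hc₁.2.2.2.1
        have e2 := hc₂.2.2.2.1
        rw [hcc] at e1
        rw [e1] at e2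
        simpa using e2
      rw [hkk, hcc]
    · intro l hl
      rw [Finset.mem_filter, mem_pathsF] at hl
      rcases isPathIn_cases hij hl.1 with h | ⟨k, c, hkj, hlamik, hc, rfl⟩
      · exact absurd h hl.2
      · have hkA : k ∈ A.erase i :=
          hc.2.2.1 k (List.mem_of_mem_head? (Option.mem_def.mpr hc.2.2.2.1))
        refine ⟨⟨k, c⟩, ?_, rfl⟩
        rw [Finset.mem_sigma, Finset.mem_filter]
        exact ⟨⟨Finset.mem_erase.mpr ⟨hkj, hkA⟩, hlamik⟩, mem_pathsF.mpr hc⟩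
    · rintro ⟨k, c⟩ hp
      rfl

lemma sdiff_insert₁ (A S : Finset (Fin n)) (a : Fin n) :
    A \ insert a S = (A.erase a) \ S := by
  ext v
  simp only [Finset.mem_sdiff, Finset.mem_erase, Finset.mem_insert]
  tauto

lemma pathWeight_cons (lam : Fin n → Fin n → ℝ) (a b : Fin n) (t : List (Fin n)) :
    pathWeight lam (a :: b :: t) = -lam a b * pathWeight lam (b :: t) := by
  simp [pathWeight]

lemma CD_aux (r : Fin n → ℝ) (lam : Fin n → Fin n → ℝ)
    (hsym : ∀ j k, lam j k = lam k j) :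
    ∀ (N : ℕ) (A : Finset (Fin n)), A.card ≤ N → ∀ (i j : Fin n),
      i ∈ A → j ∈ A → i ≠ j →
      mu r lam (A.erase i) * mu r lam (A.erase j) -
          mu r lam ((A.erase i).erase j) * mu r lam A =
        ∑ l ∈ pathsF lam A i j, C (pathWeight lam l) * mu r lam (A \ l.toFinset) ^ 2 := by
  intro N
  induction N with
  | zero =>
    intro A hA i j hi hj hij
    rw [Finset.card_eq_zero.mp (Nat.le_zero.mp hA)] at hi
    exact absurd hi (Finset.notMem_empty i)
  | succ N ih =>
    intro A hA i j hi hj hij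
    have hji : j ≠ i := hij.symm
    have hjB : j ∈ A.erase i := Finset.mem_erase.mpr ⟨hji, hj⟩
    have hiAj : i ∈ A.erase j := Finset.mem_erase.mpr ⟨hij, hi⟩
    have hcard : (A.erase i).card ≤ N := by
      have h1 := Finset.card_erase_of_mem hi
      have h2 := Finset.card_pos.mpr ⟨i, hi⟩
      omega
    have hexpA := mu_expand r lam hsym hi
    have hexpAj := mu_expand r lam hsym hiAj
    rw [Finset.erase_right_comm (s := A) (a := j) (b := i)] at hexpAj
    -- term rewriting for the long-path part
    have hterm : ∀ k, ∀ c ∈ pathsF lam (A.erase i) k j,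
        C (pathWeight lam (i :: c)) * mu r lam (A \ (i :: c).toFinset) ^ 2
          = C (-lam i k) * (C (pathWeight lam c) * mu r lam ((A.erase i) \ c.toFinset) ^ 2) := by
      intro k c hc
      have hcp := mem_pathsF.mp hc
      obtain ⟨t, hct⟩ := head_eq_of_path hcp
      subst hct
      rw [pathWeight_cons, map_mul, List.toFinset_cons, sdiff_insert₁, mul_assoc]
    have hRHS : ∑ l ∈ pathsF lam A i j, C (pathWeight lam l) * mu r lam (A \ l.toFinset) ^ 2
        = C (-lam i j) * mu r lam ((A.erase i).erase j) ^ 2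
          + ∑ k ∈ (A.erase i).erase j, C (-lam i k) *
              (mu r lam ((A.erase i).erase k) * mu r lam ((A.erase i).erase j)
                - mu r lam (((A.erase i).erase k).erase j) * mu r lam (A.erase i)) := by
      rw [path_sum_decomp _ hi hj hij]
      congr 1
      · have hw : pathWeight lam [i, j] = -lam i j := by simp [pathWeight]
        have hset : A \ [i, j].toFinset = (A.erase i).erase j := by
          ext v
          simp only [Finset.mem_sdiff, List.mem_toFinset, List.mem_cons, List.not_mem_nil,
            or_false, Finset.mem_erase]
          tauto
        by_cases h : lam i j ≠ 0
        · rw [if_pos h, hw, hset]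
        · rw [if_neg h]
          push_neg at h
          rw [h]
          simp
      · rw [Finset.sum_sigma]
        calc ∑ k ∈ ((A.erase i).erase j).filter (fun k => lam i k ≠ 0),
                ∑ c ∈ pathsF lam (A.erase i) k j,
                  C (pathWeight lam (i :: c)) * mu r lam (A \ (i :: c).toFinset) ^ 2
            = ∑ k ∈ ((A.erase i).erase j).filter (fun k => lam i k ≠ 0),
                C (-lam i k) * ∑ c ∈ pathsF lam (A.erase i) k j,
                  C (pathWeight lam c) * mu r lam ((A.erase i) \ c.toFinset) ^ 2 := by
              refine Finset.sum_congr rfl fun k hk => ?_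
              rw [Finset.mul_sum]
              exact Finset.sum_congr rfl fun c hc => hterm k c hc
          _ = ∑ k ∈ (A.erase i).erase j,
                C (-lam i k) * ∑ c ∈ pathsF lam (A.erase i) k j,
                  C (pathWeight lam c) * mu r lam ((A.erase i) \ c.toFinset) ^ 2 := by
              refine Finset.sum_subset (Finset.filter_subset _ _) fun k hk hk' => ?_
              have hz : lam i k = 0 := by
                by_contra h
                exact hk' (Finset.mem_filter.mpr ⟨hk, h⟩)
              rw [hz]
              simp
          _ = ∑ k ∈ (A.erase i).erase j, C (-lam i k) *
                (mu r lam ((A.erase i).erase k) * mu r lam ((A.erase i).erase j)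
                  - mu r lam (((A.erase i).erase k).erase j) * mu r lam (A.erase i)) := by
              refine Finset.sum_congr rfl fun k hk => ?_
              rw [ih (A.erase i) hcard k j (Finset.mem_of_mem_erase hk) hjB
                (Finset.mem_erase.mp hk).1]
    rw [hRHS, hexpA, hexpAj,
      ← Finset.add_sum_erase (A.erase i)
        (fun k => C (lam i k) * mu r lam ((A.erase i).erase k)) hjB]
    have hrw : ∀ k ∈ (A.erase i).erase j,
        C (-lam i k) * (mu r lam ((A.erase i).erase k) * mu r lam ((A.erase i).erase j)
            - mu r lam (((A.erase i).erase k).erase j) * mu r lam (A.erase i))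
          = mu r lam (A.erase i) * (C (lam i k) * mu r lam (((A.erase i).erase j).erase k))
            - mu r lam ((A.erase i).erase j) * (C (lam i k) * mu r lam ((A.erase i).erase k)) := by
      intro k hk
      rw [show ((A.erase i).erase k).erase j = ((A.erase i).erase j).erase k from
        Finset.erase_right_comm, map_neg]
      ring
    rw [Finset.sum_congr rfl hrw, Finset.sum_sub_distrib, ← Finset.mul_sum, ← Finset.mul_sum,
      map_neg]
    ring


end CDproof

/-- (Christoffel–Darboux)
`μ(G∖i)·μ(G∖j) − μ(G∖{i,j})·μ(G) = ∑_{c ∈ [i→j]} λ_c · μ(G∖c)²`. -/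
theorem stmt_2 (n : ℕ) (hn : 0 < n) (r : Fin n → ℝ) (lam : Fin n → Fin n → ℝ)
    (hsym : ∀ j k, lam j k = lam k j) (hnonpos : ∀ j k, lam j k ≤ 0)
    (hdiag : ∀ i, lam i i = 0) (i j : Fin n) (hij : i ≠ j) :
    mu r lam (Finset.univ.erase i) * mu r lam (Finset.univ.erase j) -
        mu r lam ((Finset.univ.erase i).erase j) * mu r lam Finset.univ =
      ∑ᶠ l ∈ {l : List (Fin n) | IsPathIn lam Finset.univ i j l},
        Polynomial.C (pathWeight lam l) * mu r lam (Finset.univ \ l.toFinset) ^ 2 := by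
  rw [CDproof.finsum_paths]
  exact CDproof.CD_aux r lam hsym n Finset.univ (le_of_eq (by simp)) i j
    (Finset.mem_univ i) (Finset.mem_univ j) hij
end
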